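/- Let μ, ν be finite measures on ℝ with finite first moments and μ ≤_E ν. Then the convex hull (P_ν - P_μ)^c belongs to 𝒟(ν(ℝ)-μ(ℝ), \bar{ν}-\bar{μ}); i.e., it is nonnegative, nondecreasing, convex, tends to 0 at -∞ and is asymptotic to k ↦ (ν(ℝ)-μ(ℝ))k - (\bar{ν}-\bar{μ}) at +∞. -/

import Mathlib

open MeasureTheory Set Filter

noncomputable def pot (eta : Measure ℝ) (k : ℝ) : ℝ := ∫ x, max (k - x) 0 ∂eta

noncomputable def cpot (eta : Measure ℝ) (k : ℝ) : ℝ := ∫ x, max (x - k) 0 ∂eta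

/-- `c` is the convex hull (largest convex minorant) of `f`. -/
def IsConvexHull (f c : ℝ → ℝ) : Prop :=
  ConvexOn ℝ Set.univ c ∧ (∀ x, c x ≤ f x) ∧
    ∀ g : ℝ → ℝ, ConvexOn ℝ Set.univ g → (∀ x, g x ≤ f x) → ∀ x, g x ≤ c x

/-- Convex order: `∫ f dη ≤ ∫ f dχ` for all convex `f` for which both integrals exist. -/
def Cx (eta chi : Measure ℝ) : Prop :=
  ∀ f : ℝ → ℝ, ConvexOn ℝ Set.univ f → Integrable f eta → Integrable f chi →
    ∫ x, f x ∂eta ≤ ∫ x, f x ∂chi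

/-- Extended convex order: `∫ f dη ≤ ∫ f dχ` for all nonnegative convex `f`. -/
def ECx (eta chi : Measure ℝ) : Prop :=
  ∀ f : ℝ → ℝ, ConvexOn ℝ Set.univ f → (∀ x, 0 ≤ f x) →
    ∫⁻ x, ENNReal.ofReal (f x) ∂eta ≤ ∫⁻ x, ENNReal.ofReal (f x) ∂chi

/-- The class `𝒟(a, b)`: nonnegative, nondecreasing, convex functions vanishing at `-∞`
and asymptotic to `a * z - b` at `+∞`. -/
def MemD (a b : ℝ) (f : ℝ → ℝ) : Prop :=
  ConvexOn ℝ Set.univ f ∧ Monotone f ∧ (∀ x, 0 ≤ f x) ∧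
    Tendsto f atBot (nhds 0) ∧
    Tendsto (fun z => f z - (a * z - b)) atTop (nhds 0)

/-- `S` is the shadow of `μ` in `ν`. -/
def IsShadow (mu nu S : Measure ℝ) : Prop :=
  Cx mu S ∧ S ≤ nu ∧ ∀ eta : Measure ℝ, Cx mu eta → eta ≤ nu → Cx S eta

/-- `T` is the counter-shadow of `μ` in `ν`. -/
def IsCounterShadow (mu nu T : Measure ℝ) : Prop :=
  Cx mu T ∧ T ≤ nu ∧ ∀ eta : Measure ℝ, Cx mu eta → eta ≤ nu → Cx eta T

-- auxiliary lemmas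

lemma affine_convexOn (a b : ℝ) : ConvexOn ℝ Set.univ (fun k : ℝ => a * k - b) :=
  ⟨convex_univ, fun x _ y _ p q _ _ hpq => by
    simp only [smul_eq_mul]
    apply le_of_eq
    linear_combination b * hpq⟩

lemma int_pos_part (eta : Measure ℝ) [IsFiniteMeasure eta]
    (hint : Integrable (fun x => x) eta) (k : ℝ) :
    Integrable (fun x => max (k - x) 0) eta :=
  ((integrable_const k).sub hint).pos_part

lemma int_neg_part (eta : Measure ℝ) [IsFiniteMeasure eta]
    (hint : Integrable (fun x => x) eta) (k : ℝ) :
    Integrable (fun x => max (x - k) 0) eta :=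
  (hint.sub (integrable_const k)).pos_part

lemma cxOn_pos_part (k : ℝ) : ConvexOn ℝ Set.univ (fun x : ℝ => max (k - x) 0) := by
  have h := (affine_convexOn (-1) (-k)).sup (convexOn_const 0 convex_univ)
  convert h using 2 with x
  case e'_12 =>
    simp [Pi.sup_apply, max_comm]
    ring_nf
  all_goals rfl

lemma cxOn_neg_part (k : ℝ) : ConvexOn ℝ Set.univ (fun x : ℝ => max (x - k) 0) := by
  have h := (affine_convexOn 1 k).sup (convexOn_const 0 convex_univ)
  convert h using 2 with x
  case e'_12 =>
    simp [Pi.sup_apply, max_comm]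
  all_goals rfl

lemma pot_le (mu nu : Measure ℝ) [IsFiniteMeasure mu] [IsFiniteMeasure nu]
    (hintm : Integrable (fun x => x) mu) (hintn : Integrable (fun x => x) nu)
    (hE : ECx mu nu) (k : ℝ) : pot mu k ≤ pot nu k := by
  have hnn : ∀ x : ℝ, 0 ≤ max (k - x) 0 := fun x => le_max_right _ _
  have h := hE _ (cxOn_pos_part k) hnn
  have h1 := ofReal_integral_eq_lintegral_ofReal (int_pos_part mu hintm k)
    (ae_of_all _ hnn)
  have h2 := ofReal_integral_eq_lintegral_ofReal (int_pos_part nu hintn k)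
    (ae_of_all _ hnn)
  rw [← h1, ← h2] at h
  have : 0 ≤ pot nu k := integral_nonneg hnn
  rw [pot, pot]
  exact (ENNReal.ofReal_le_ofReal_iff this).1 h

lemma cpot_le (mu nu : Measure ℝ) [IsFiniteMeasure mu] [IsFiniteMeasure nu]
    (hintm : Integrable (fun x => x) mu) (hintn : Integrable (fun x => x) nu)
    (hE : ECx mu nu) (k : ℝ) : cpot mu k ≤ cpot nu k := by
  have hnn : ∀ x : ℝ, 0 ≤ max (x - k) 0 := fun x => le_max_right _ _
  have h := hE _ (cxOn_neg_part k) hnn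
  have h1 := ofReal_integral_eq_lintegral_ofReal (int_neg_part mu hintm k)
    (ae_of_all _ hnn)
  have h2 := ofReal_integral_eq_lintegral_ofReal (int_neg_part nu hintn k)
    (ae_of_all _ hnn)
  rw [← h1, ← h2] at h
  have : 0 ≤ cpot nu k := integral_nonneg hnn
  rw [cpot, cpot]
  exact (ENNReal.ofReal_le_ofReal_iff this).1 h

lemma pot_sub_cpot (eta : Measure ℝ) [IsFiniteMeasure eta]
    (hint : Integrable (fun x => x) eta) (k : ℝ) :
    pot eta k - cpot eta k = k * (eta Set.univ).toReal - ∫ x, x ∂eta := by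
  rw [pot, cpot, ← integral_sub (int_pos_part eta hint k) (int_neg_part eta hint k)]
  have : ∀ x : ℝ, max (k - x) 0 - max (x - k) 0 = k - x := by
    intro x
    rcases le_total x k with h | h
    · rw [max_eq_left (by linarith), max_eq_right (by linarith)]; ring
    · rw [max_eq_right (by linarith), max_eq_left (by linarith)]; ring
  simp_rw [this]
  rw [integral_sub (integrable_const k) hint, integral_const, smul_eq_mul, mul_comm]
  rfl

lemma pot_tendsto_atBot (eta : Measure ℝ) [IsFiniteMeasure eta]
    (hint : Integrable (fun x => x) eta) :
    Tendsto (pot eta) atBot (nhds 0) := by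
  have h0 : (0 : ℝ) = ∫ x : ℝ, (0 : ℝ) ∂eta := by simp
  rw [h0]
  apply tendsto_integral_filter_of_dominated_convergence (fun x => |x|)
  · filter_upwards with k
    exact (int_pos_part eta hint k).aestronglyMeasurable
  · filter_upwards [eventually_le_atBot (0 : ℝ)] with k hk
    filter_upwards with x
    rw [Real.norm_eq_abs, abs_of_nonneg (le_max_right _ _)]
    rcases le_total (k - x) 0 with h | h
    · rw [max_eq_right h]; exact abs_nonneg x
    · rw [max_eq_left h]
      have : -x ≤ |x| := neg_le_abs x
      linarith
  · exact hint.abs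
  · filter_upwards with x
    apply Tendsto.congr' _ tendsto_const_nhds
    filter_upwards [eventually_le_atBot x] with k hk
    exact (max_eq_right (by linarith)).symm

lemma cpot_tendsto_atTop (eta : Measure ℝ) [IsFiniteMeasure eta]
    (hint : Integrable (fun x => x) eta) :
    Tendsto (cpot eta) atTop (nhds 0) := by
  have h0 : (0 : ℝ) = ∫ x : ℝ, (0 : ℝ) ∂eta := by simp
  rw [h0]
  apply tendsto_integral_filter_of_dominated_convergence (fun x => |x|)
  · filter_upwards with k
    exact (int_neg_part eta hint k).aestronglyMeasurable
  · filter_upwards [eventually_ge_atTop (0 : ℝ)] with k hk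
    filter_upwards with x
    rw [Real.norm_eq_abs, abs_of_nonneg (le_max_right _ _)]
    rcases le_total (x - k) 0 with h | h
    · rw [max_eq_right h]; exact abs_nonneg x
    · rw [max_eq_left h]
      have : x ≤ |x| := le_abs_self x
      linarith
  · exact hint.abs
  · filter_upwards with x
    apply Tendsto.congr' _ tendsto_const_nhds
    filter_upwards [eventually_ge_atTop x] with k hk
    exact (max_eq_right (by linarith)).symm

lemma monotone_of_convex_tendsto_atBot {c : ℝ → ℝ} (hc : ConvexOn ℝ Set.univ c)
    (h0 : ∀ x, 0 ≤ c x) (hb : Tendsto c atBot (nhds 0)) : Monotone c := by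
  intro x y hxy
  rcases eq_or_lt_of_le hxy with rfl | hxy
  · exact le_rfl
  by_contra hcon
  push_neg at hcon
  set s := (c y - c x) / (y - x) with hs
  have hs0 : s < 0 := div_neg_of_neg_of_pos (by linarith) (by linarith)
  set M := (c x + 1) / (-s) with hM
  have hev1 : ∀ᶠ z in atBot, c z < c x + 1 :=
    hb.eventually_lt_const (by linarith [h0 x])
  obtain ⟨z, hz1, hz2⟩ := (hev1.and (eventually_lt_atBot (min x (x - M)))).exists
  have hzx : z < x := lt_of_lt_of_le hz2 (min_le_left _ _)
  have hzM : z < x - M := lt_of_lt_of_le hz2 (min_le_right _ _)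
  have hslope := hc.slope_mono_adjacent (Set.mem_univ z) (Set.mem_univ y) hzx hxy
  -- (c x - c z) / (x - z) ≤ s
  have hineq : (c x - c z) / (x - z) ≤ s := hslope
  have hxz : (0:ℝ) < x - z := by linarith
  have h1 : c x - c z ≤ s * (x - z) := by
    rw [div_le_iff₀ hxz] at hineq; linarith
  have h2 : M < x - z := by linarith
  have h3 : s * (x - z) < s * M := by
    apply (mul_lt_mul_left_of_neg hs0).2 h2
  have hsne : s ≠ 0 := ne_of_lt hs0
  have h4 : s * M = -(c x + 1) := by
    rw [hM, div_neg, mul_neg, mul_div_assoc', mul_div_cancel_left₀ _ hsne]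
  linarith [h0 x]

theorem stmt12 (mu nu : Measure ℝ) [IsFiniteMeasure mu] [IsFiniteMeasure nu]
    (hintm : Integrable (fun x => x) mu) (hintn : Integrable (fun x => x) nu)
    (hE : ECx mu nu) (c : ℝ → ℝ)
    (hc : IsConvexHull (fun k => pot nu k - pot mu k) c) :
    MemD ((nu Set.univ).toReal - (mu Set.univ).toReal) (∫ x, x ∂nu - ∫ x, x ∂mu) c := by
  obtain ⟨hcvx, hle, hmax⟩ := hc
  have hf0 : ∀ k, 0 ≤ pot nu k - pot mu k := fun k =>
    sub_nonneg.2 (pot_le mu nu hintm hintn hE k)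
  have hfl : ∀ k : ℝ, (pot nu k - pot mu k) -
      (((nu Set.univ).toReal - (mu Set.univ).toReal) * k - (∫ x, x ∂nu - ∫ x, x ∂mu)) =
      cpot nu k - cpot mu k := by
    intro k
    have h1 := pot_sub_cpot nu hintn k
    have h2 := pot_sub_cpot mu hintm k
    linear_combination h1 - h2
  have hlf : ∀ k : ℝ,
      ((nu Set.univ).toReal - (mu Set.univ).toReal) * k - (∫ x, x ∂nu - ∫ x, x ∂mu) ≤
        pot nu k - pot mu k := by
    intro k
    rw [← sub_nonneg, hfl k]
    exact sub_nonneg.2 (cpot_le mu nu hintm hintn hE k)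
  set g : ℝ → ℝ := fun k =>
    max (((nu Set.univ).toReal - (mu Set.univ).toReal) * k - (∫ x, x ∂nu - ∫ x, x ∂mu)) 0
    with hg
  have hgcv : ConvexOn ℝ Set.univ g := by
    have h := (affine_convexOn ((nu Set.univ).toReal - (mu Set.univ).toReal)
      (∫ x, x ∂nu - ∫ x, x ∂mu)).sup (convexOn_const 0 convex_univ)
    convert h using 2 with x
    all_goals rfl
  have hgle : ∀ k, g k ≤ pot nu k - pot mu k := fun k => max_le (hlf k) (hf0 k)
  have hgc : ∀ k, g k ≤ c k := hmax g hgcv hgle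
  have hcnn : ∀ k, 0 ≤ c k := fun k => (le_max_right _ _).trans (hgc k)
  have htb : Tendsto c atBot (nhds 0) := by
    have hmid : Tendsto (fun k => pot nu k - pot mu k) atBot (nhds 0) := by
      simpa using (pot_tendsto_atBot nu hintn).sub (pot_tendsto_atBot mu hintm)
    exact tendsto_of_tendsto_of_tendsto_of_le_of_le tendsto_const_nhds hmid hcnn hle
  have htt : Tendsto (fun z => c z -
      (((nu Set.univ).toReal - (mu Set.univ).toReal) * z - (∫ x, x ∂nu - ∫ x, x ∂mu)))
      atTop (nhds 0) := by
    have hmid : Tendsto (fun k => cpot nu k - cpot mu k) atTop (nhds 0) := by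
      simpa using (cpot_tendsto_atTop nu hintn).sub (cpot_tendsto_atTop mu hintm)
    apply tendsto_of_tendsto_of_tendsto_of_le_of_le tendsto_const_nhds hmid
    · intro z
      dsimp only
      have h1 : ((nu Set.univ).toReal - (mu Set.univ).toReal) * z -
          (∫ x, x ∂nu - ∫ x, x ∂mu) ≤ g z := le_max_left _ _
      have := (h1.trans (hgc z))
      linarith
    · intro z
      dsimp only
      have h3 : c z ≤ pot nu z - pot mu z := hle z
      have h2 := hfl z
      linarith
  exact ⟨hcvx, monotone_of_convex_tendsto_atBot hcvx hcnn htb, hcnn, htb, htt⟩
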